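/- In M_n(ℂ)^{⊗(m+1)} with m ≥ 1, for every tuple (j_1,…,j_m) ∈ (Fin n)^m: u_m · (e_{j_1} ⊗ ⋯ ⊗ e_{j_m} ⊗ 1) · u_mᴴ = e_{j_1} ⊗ ⋯ ⊗ e_{j_{m−1}} ⊗ ( Σ_{k∈Fin n} e_{j_m − k} ⊗ f_k ), where the subtraction j_m − k is taken in Fin n. -/

import Mathlib

open Matrix Kronecker

noncomputable section

/-- The primitive `n`-th root of unity `exp(2πi/n)`. -/
def omega (n : ℕ) : ℂ := Complex.exp (2 * Real.pi * Complex.I / n)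

/-- The diagonal matrix unit `e_i` with a `1` in entry `(i,i)`. -/
def eM (n : ℕ) (i : Fin n) : Matrix (Fin n) (Fin n) ℂ := Matrix.single i i 1

/-- The cyclic shift matrix `w`, with `w(a,b) = 1` iff `b = a + 1` (mod `n`). -/
def wM (n : ℕ) [NeZero n] : Matrix (Fin n) (Fin n) ℂ :=
  Matrix.of fun a b => if b = a + 1 then 1 else 0

/-- The spectral projections `f_k = (1/n) Σ_j ω^{-jk} w^j` of `w`. -/
def fM (n : ℕ) [NeZero n] (k : Fin n) : Matrix (Fin n) (Fin n) ℂ :=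
  ((n : ℂ))⁻¹ • ∑ j : Fin n, (omega n ^ ((j : ℕ) * (k : ℕ)))⁻¹ • wM n ^ (j : ℕ)

/-- The normalized trace of a square matrix: the trace divided by the size. -/
def nτ {ι : Type*} [Fintype ι] (A : Matrix ι ι ℂ) : ℂ :=
  Matrix.trace A / (Fintype.card ι)

/-- The `N`-fold elementary tensor `A_0 ⊗ ⋯ ⊗ A_{N-1}` of `n × n` matrices,
realized as a matrix indexed by functions `Fin N → Fin n`. -/
def tens (n N : ℕ) (A : Fin N → Matrix (Fin n) (Fin n) ℂ) :
    Matrix (Fin N → Fin n) (Fin N → Fin n) ℂ :=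
  Matrix.of fun x y => ∏ k, A k (x k) (y k)

/-- `u_s = 1^{⊗(s-1)} ⊗ v ⊗ 1^{⊗…}` where `v = Σ_i w^i ⊗ f_i` occupies factors
`s-1` and `s` of the `N`-fold tensor power. -/
def uM (n N : ℕ) [NeZero n] (s : ℕ) : Matrix (Fin N → Fin n) (Fin N → Fin n) ℂ :=
  ∑ i : Fin n, tens n N fun k =>
    if (k : ℕ) + 1 = s then wM n ^ (i : ℕ)
    else if (k : ℕ) = s then fM n i
    else 1

/-- `U_m = u_1 u_2 ⋯ u_m` inside the `N`-fold tensor power. -/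
def UM (n N m : ℕ) [NeZero n] : Matrix (Fin N → Fin n) (Fin N → Fin n) ℂ :=
  (((List.range m).map fun s => uM n N (s + 1))).prod

/-- `F_r = f_r ⊗ 1 ⊗ ⋯ ⊗ 1` inside the `N`-fold tensor power. -/
def FM (n N : ℕ) [NeZero n] (r : Fin n) : Matrix (Fin N → Fin n) (Fin N → Fin n) ℂ :=
  tens n N fun k => if (k : ℕ) = 0 then fM n r else 1

/-- `E(i) = e_{i_1} ⊗ ⋯ ⊗ e_{i_m} ⊗ 1 ⊗ ⋯ ⊗ 1` inside the `N`-fold tensor power,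
with the `e`'s occupying factors `0, …, m-1`. -/
def EM (n N m : ℕ) (i : Fin m → Fin n) : Matrix (Fin N → Fin n) (Fin N → Fin n) ℂ :=
  tens n N fun k => if h : (k : ℕ) < m then eM n (i ⟨(k : ℕ), h⟩) else 1

set_option linter.unusedSectionVars false
namespace S12
open Fin.CommRing
set_option linter.unusedSectionVars false
variable (n : ℕ) [NeZero n]
lemma omega_prim : IsPrimitiveRoot (omega n) n := Complex.isPrimitiveRoot_exp n (NeZero.ne n)
lemma omega_pow_n : omega n ^ n = 1 := (omega_prim n).pow_eq_one
lemma omega_ne_zero : omega n ≠ 0 := Complex.exp_ne_zero _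
def chi (x : Fin n) : ℂ := omega n ^ (x : ℕ)
variable {n}
lemma chi_natCast (s : ℕ) : chi n (s : Fin n) = omega n ^ s := by
  unfold chi; rw [Fin.val_natCast, ← pow_eq_pow_mod s (omega_pow_n n)]
lemma chi_add (x y : Fin n) : chi n (x + y) = chi n x * chi n y := by
  unfold chi; rw [Fin.val_add, ← pow_eq_pow_mod _ (omega_pow_n n), pow_add]
lemma chi_zero : chi n 0 = 1 := by simp [chi]
lemma chi_ne_zero (x : Fin n) : chi n x ≠ 0 := pow_ne_zero _ (omega_ne_zero n)
lemma chi_neg (x : Fin n) : chi n (-x) = (chi n x)⁻¹ := by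
  have h : chi n x * chi n (-x) = 1 := by rw [← chi_add]; simp [chi_zero]
  field_simp [chi_ne_zero x] at h ⊢
  linear_combination h
lemma chi_sub (x y : Fin n) : chi n (x - y) = chi n x * (chi n y)⁻¹ := by
  rw [sub_eq_add_neg, chi_add, chi_neg]
lemma omega_pow_valmul (x y : Fin n) : omega n ^ ((x : ℕ) * (y : ℕ)) = chi n (x * y) := by
  unfold chi; rw [Fin.val_mul, ← pow_eq_pow_mod _ (omega_pow_n n)]
lemma sum_chi (d : Fin n) : ∑ t : Fin n, chi n (t * d) = if d = 0 then (n : ℂ) else 0 := by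
  have key : ∀ t : Fin n, chi n (t * d) = (omega n ^ (d : ℕ)) ^ (t : ℕ) := by
    intro t; rw [← omega_pow_valmul, ← pow_mul, mul_comm]
  simp_rw [key]
  rw [Fin.sum_univ_eq_sum_range (fun i => (omega n ^ (d:ℕ)) ^ i) n]
  split_ifs with h
  · subst h; simp
  · have hd0 : 0 < (d : ℕ) := Nat.pos_of_ne_zero (fun hc => h (by ext; simp [hc]))
    have hne : omega n ^ (d : ℕ) ≠ 1 :=
      (omega_prim n).pow_ne_one_of_pos_of_lt hd0.ne' d.isLt
    rw [geom_sum_eq hne, ← pow_mul, mul_comm, pow_mul, omega_pow_n, one_pow]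
    simp

-- entries of w^t
lemma wM_pow_apply (t : ℕ) (a b : Fin n) :
    (wM n ^ t) a b = if b = a + (t : Fin n) then 1 else 0 := by
  induction t generalizing a b with
  | zero => simp [Matrix.one_apply, eq_comm]
  | succ t ih =>
    rw [pow_succ, Matrix.mul_apply]
    simp_rw [ih, wM]
    rw [Finset.sum_eq_single (a + (t : Fin n))]
    · push_cast
      simp [of_apply, eq_comm, add_assoc]
    · intro c _ hc
      simp only [of_apply, ite_mul, one_mul, zero_mul, ite_eq_right_iff]
      intro h1
      exact absurd h1 hc
    · simp

lemma star_chi (x : Fin n) : star (chi n x) = (chi n x)⁻¹ := by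
  unfold chi omega
  rw [← Complex.exp_nat_mul, ← Complex.exp_neg]
  show (starRingEnd ℂ) _ = _
  rw [← Complex.exp_conj]
  congr 1
  simp [_root_.map_mul, map_div₀, Complex.conj_I, Complex.conj_ofReal, map_ofNat]
  ring

lemma fM_apply (k : Fin n) (a b : Fin n) :
    fM n k a b = (n : ℂ)⁻¹ * (chi n ((b - a) * k))⁻¹ := by
  unfold fM
  rw [Matrix.smul_apply, Matrix.sum_apply]
  simp_rw [Matrix.smul_apply, wM_pow_apply, Fin.cast_val_eq_self, smul_eq_mul]
  rw [Finset.sum_eq_single (b - a)]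
  · rw [omega_pow_valmul, if_pos (by ring : b = a + (b - a)), mul_one]
  · intro c _ hc
    rw [if_neg, mul_zero]
    intro h
    exact hc (by rw [h]; ring)
  · simp
lemma fM_conjTranspose (k : Fin n) : (fM n k)ᴴ = fM n k := by
  ext a b
  rw [Matrix.conjTranspose_apply, fM_apply, fM_apply]
  rw [star_mul']
  simp only [star_inv₀, star_chi, inv_inv, star_natCast]
  congr 1
  have : ((a - b) * k : Fin n) = -((b - a) * k) := by ring
  rw [this, chi_neg]

lemma fM_mul_fM (k l : Fin n) : fM n k * fM n l = if k = l then fM n k else 0 := by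
  ext a b
  rw [Matrix.mul_apply]
  simp_rw [fM_apply]
  rw [← Equiv.sum_comp (Equiv.addLeft a) (fun c => ((n:ℂ)⁻¹ * (chi n ((c - a) * k))⁻¹) * ((n:ℂ)⁻¹ * (chi n ((b - c) * l))⁻¹))]
  have key : ∀ t : Fin n, ((n:ℂ)⁻¹ * (chi n (((Equiv.addLeft a) t - a) * k))⁻¹) * ((n:ℂ)⁻¹ * (chi n ((b - (Equiv.addLeft a) t) * l))⁻¹)
      = (n:ℂ)⁻¹ * (n:ℂ)⁻¹ * (chi n ((b - a) * l))⁻¹ * chi n (t * (l - k)) := by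
    intro t
    have h1 : ((Equiv.addLeft a) t - a) = t := by
      rw [Equiv.coe_addLeft]; ring
    have h2 : (b - (Equiv.addLeft a) t) = (b - a) - t := by
      rw [Equiv.coe_addLeft]; ring
    rw [h1, h2]
    have h3 : (((b - a) - t) * l : Fin n) = (b - a) * l - t * l := by ring
    have h4 : (t * (l - k) : Fin n) = t * l - t * k := by ring
    rw [h3, h4, chi_sub, chi_sub]
    field_simp [chi_ne_zero]
  simp_rw [key]
  rw [← Finset.mul_sum, sum_chi]
  have hsub : (l - k = 0) ↔ (k = l) := sub_eq_zero.trans eq_comm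
  split_ifs with h1 h2 h3
  · rw [fM_apply]
    subst h2
    have hn0 : (n : ℂ) ≠ 0 := Nat.cast_ne_zero.mpr (NeZero.ne n)
    field_simp [chi_ne_zero]
  · exact absurd (hsub.mp h1) h2
  · exact absurd (hsub.mpr h3) h1
  · simp


lemma w_e_w (i jj : Fin n) :
    (wM n ^ (i : ℕ)) * eM n jj * (wM n ^ (i : ℕ))ᴴ = eM n (jj - i) := by
  ext a b
  simp only [Matrix.mul_apply, Matrix.conjTranspose_apply, wM_pow_apply, Fin.cast_val_eq_self,
    eM, Matrix.single, Matrix.of_apply, ite_mul, mul_ite, one_mul, mul_one, zero_mul,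
    mul_zero, apply_ite (star : ℂ → ℂ), star_one, star_zero]
  rw [Finset.sum_eq_single (b + i)]
  · rw [Finset.sum_eq_single (a + i)]
    · rw [if_pos rfl]
      by_cases h1 : jj = a + i <;> by_cases h2 : jj = b + i
      · rw [if_pos ⟨h1, h2⟩, if_pos rfl, if_pos ⟨by rw [h1]; ring, by rw [h2]; ring⟩]
      · rw [if_neg (by tauto), if_neg ?_]
        · rintro ⟨hA, hB⟩; exact h2 (by rw [← hB]; ring)
      · rw [if_neg (by tauto), if_neg ?_]
        · rintro ⟨hA, hB⟩; exact h1 (by rw [← hA]; ring)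
      · rw [if_neg (by tauto), if_neg ?_]
        · rintro ⟨hA, hB⟩; exact h1 (by rw [← hA]; ring)
    · intro c _ hc
      simp [hc]
    · simp
  · intro d _ hd
    rw [if_neg hd]
  · simp

lemma tens_mul {n : ℕ} (N : ℕ) (A B : Fin N → Matrix (Fin n) (Fin n) ℂ) :
    tens n N A * tens n N B = tens n N fun k => A k * B k := by
  ext x y
  simp only [tens, Matrix.of_apply, Matrix.mul_apply]
  rw [Finset.prod_univ_sum, Fintype.piFinset_univ]
  exact Finset.sum_congr rfl fun z _ => (Finset.prod_mul_distrib).symm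

lemma tens_conjT {n : ℕ} (N : ℕ) (A : Fin N → Matrix (Fin n) (Fin n) ℂ) :
    (tens n N A)ᴴ = tens n N fun k => (A k)ᴴ := by
  ext x y
  simp [tens, Matrix.conjTranspose_apply, star_prod]

lemma tens_zero {n : ℕ} (N : ℕ) (A : Fin N → Matrix (Fin n) (Fin n) ℂ) (k0 : Fin N)
    (h : A k0 = 0) : tens n N A = 0 := by
  ext x y
  simp only [tens, Matrix.of_apply, Matrix.zero_apply]
  exact Finset.prod_eq_zero (Finset.mem_univ k0) (by simp [h])

end S12

open S12 in
/-- in `M_n(ℂ)^{⊗(m+1)}` with `m ≥ 1`, conjugating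
`e_{j_1} ⊗ ⋯ ⊗ e_{j_m} ⊗ 1` by `u_m` gives
`e_{j_1} ⊗ ⋯ ⊗ e_{j_{m-1}} ⊗ (Σ_k e_{j_m - k} ⊗ f_k)`. -/
theorem statement12 (n : ℕ) [NeZero n] (hn : 2 ≤ n) (m : ℕ) (hm : 1 ≤ m)
    (j : Fin m → Fin n) :
    uM n (m + 1) m * EM n (m + 1) m j * (uM n (m + 1) m)ᴴ =
      ∑ k : Fin n, tens n (m + 1) fun l : Fin (m + 1) =>
        if h : (l : ℕ) < m - 1 then eM n (j ⟨(l : ℕ), by omega⟩)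
        else if (l : ℕ) = m - 1 then eM n (j ⟨m - 1, by omega⟩ - k)
        else fM n k := by
  classical
  have hadj : (uM n (m+1) m)ᴴ = ∑ i : Fin n, tens n (m+1) fun k : Fin (m+1) =>
      (if (k : ℕ) + 1 = m then (wM n ^ (i : ℕ))ᴴ
       else if (k : ℕ) = m then (fM n i)ᴴ else 1 : Matrix (Fin n) (Fin n) ℂ) := by
    rw [uM, Matrix.conjTranspose_sum]
    refine Finset.sum_congr rfl fun i _ => ?_
    rw [tens_conjT]
    refine congrArg (tens n (m+1)) (funext fun k => ?_)
    split_ifs <;> simp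
  rw [hadj, uM, EM, Finset.sum_mul, Finset.sum_mul]
  simp_rw [Matrix.mul_sum, tens_mul]
  refine Finset.sum_congr rfl fun i _ => ?_
  rw [Finset.sum_eq_single i]
  · refine congrArg (tens n (m+1)) (funext fun k => ?_)
    have hk := k.isLt
    by_cases h1 : (k : ℕ) < m - 1
    · rw [if_neg (by omega), if_neg (by omega), dif_pos (by omega : (k:ℕ) < m),
        if_neg (by omega), if_neg (by omega), dif_pos h1, one_mul, mul_one]
    · by_cases h2 : (k : ℕ) = m - 1
      · rw [if_pos (by omega), dif_pos (by omega : (k:ℕ) < m), if_pos (by omega),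
          dif_neg h1, if_pos h2, w_e_w]
        exact congrArg (fun t => eM n (t - i)) (congrArg j (Fin.ext h2))
      · have h3 : (k : ℕ) = m := by omega
        rw [if_neg (by omega), if_pos h3, dif_neg (by omega), mul_one,
          if_neg (by omega), if_pos h3, fM_conjTranspose, fM_mul_fM, if_pos rfl,
          dif_neg h1, if_neg h2]
  · intro i' _ hne
    refine tens_zero _ _ (Fin.last m) ?_
    have hl : ((Fin.last m : Fin (m+1)) : ℕ) = m := rfl
    rw [if_neg (by omega), if_pos hl, dif_neg (by omega), mul_one,
      if_neg (by omega), if_pos hl, fM_conjTranspose, fM_mul_fM, if_neg (Ne.symm hne)]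
  · intro h
    exact absurd (Finset.mem_univ i) h
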